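/- arXiv:2507.08722 — 2 statements merged into one kernel-verified Lean document; each statement's English description precedes it below -/
import Mathlib

section
/- Let (H,K,A,C) be a Yetter-Drinfeld datum and M a generalized Yetter-Drinfeld module in _A YD^C(H,K). Then for any left H-module V, the map β_{V,M} : V ⊗ M → M ⊗ (C ⊗_H V), v ⊗ m ↦ m_{[0]} ⊗ (m_{[1]} ⊗_H v), is left A-linear, where A acts on V ⊗ M by a·(v ⊗ m) = a_{[-1]}·v ⊗ a_{[0]}m and on M ⊗ (C ⊗_H V) by a·(m ⊗ c ⊗_H v) = a_{[0]}m ⊗ (a_{[1]} ▷ c) ⊗_H v. -/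
open TensorProduct Coalgebra

variable {k : Type} [CommRing k]

/-- The `H`-balancing submodule of `C ⊗ₖ U`, whose quotient is `C ⊗_H U`. -/
def balancer (H : Type) [Ring H] [Algebra k H]
    (C : Type) [AddCommGroup C] [Module k C] (actR : C ⊗[k] H →ₗ[k] C)
    (U : Type) [AddCommGroup U] [Module k U] [Module H U] [IsScalarTower k H U] :
    Submodule k (C ⊗[k] U) :=
  Submodule.span k {x | ∃ (c : C) (h : H) (u : U), x = actR (c ⊗ₜ h) ⊗ₜ u - c ⊗ₜ (h • u)}

/-- The half-braid `β_{V,M} : V ⊗ M → M ⊗ (C ⊗ V)` at the level of `k`-modules,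
`v ⊗ m ↦ m₍₀₎ ⊗ (m₍₁₎ ⊗ v)`. -/
noncomputable def betaRaw {C M : Type} [AddCommGroup C] [Module k C] [AddCommGroup M] [Module k M]
    (ρ : M →ₗ[k] M ⊗[k] C)
    (V : Type) [AddCommGroup V] [Module k V] :
    V ⊗[k] M →ₗ[k] M ⊗[k] (C ⊗[k] V) :=
  (TensorProduct.assoc k M C V).toLinearMap ∘ₗ (LinearMap.rTensor V ρ) ∘ₗ
    (TensorProduct.comm k V M).toLinearMap

/-- The action of `H` on a left `H`-module as a `k`-linear map `H ⊗ₖ V → V`. -/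
noncomputable def hAct (H : Type) [Ring H] [Algebra k H]
    (V : Type) [AddCommGroup V] [Module k V] [Module H V] [IsScalarTower k H V]
    [SMulCommClass k H V] : H ⊗[k] V →ₗ[k] V :=
  TensorProduct.lift (LinearMap.mk₂ k (fun h v => h • v)
    (fun h h' v => add_smul h h' v) (fun c h v => smul_assoc c h v)
    (fun h v v' => smul_add h v v') (fun c h v => (smul_comm c h v).symm))

set_option linter.unusedSectionVars false
set_option linter.unusedVariables false

section Aux

variable {H : Type} [Ring H] [Bialgebra k H]
    {K : Type} [Ring K] [Bialgebra k K]
    {A : Type} [Ring A] [Algebra k A]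
    {C : Type} [AddCommGroup C] [Module k C] [Coalgebra k C]
    {M : Type} [AddCommGroup M] [Module k M]
    (ΔL : A →ₗ[k] H ⊗[k] A) (ΔR : A →ₗ[k] A ⊗[k] K)
    (actL : K ⊗[k] C →ₗ[k] C) (actR : C ⊗[k] H →ₗ[k] C)
    (μ : A ⊗[k] M →ₗ[k] M) (ρ : M →ₗ[k] M ⊗[k] C)
    (V : Type) [AddCommGroup V] [Module k V] [Module H V] [IsScalarTower k H V]
    [SMulCommClass k H V]

lemma balQ (c : C) (h : H) (v : V) :
    (balancer H C actR V).mkQ (actR (c ⊗ₜ h) ⊗ₜ v) =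
    (balancer H C actR V).mkQ (c ⊗ₜ (h • v)) := by
  rw [← sub_eq_zero, ← map_sub, Submodule.mkQ_apply, Submodule.Quotient.mk_eq_zero]
  exact Submodule.subset_span ⟨c, h, v, rfl⟩

lemma lemA (a : A) (v : V) (m : M) :
    LinearMap.lTensor M (balancer H C actR V).mkQ
      (betaRaw ρ V ((TensorProduct.map (hAct H V) μ)
        ((TensorProduct.tensorTensorTensorComm k H A V M)
          ((LinearMap.rTensor (V ⊗[k] M) ΔL) (a ⊗ₜ (v ⊗ₜ m))))))
    = LinearMap.lTensor M ((balancer H C actR V).mkQ ∘ₗ (TensorProduct.mk k C V).flip v)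
        (((LinearMap.lTensor M actR) ∘ₗ (TensorProduct.assoc k M C H).toLinearMap ∘ₗ
          (TensorProduct.comm k H (M ⊗[k] C)).toLinearMap ∘ₗ
          (LinearMap.lTensor H (ρ ∘ₗ μ)) ∘ₗ (TensorProduct.assoc k H A M).toLinearMap ∘ₗ
          (LinearMap.rTensor M ΔL)) (a ⊗ₜ m)) := by
  simp only [LinearMap.comp_apply, LinearEquiv.coe_coe, LinearMap.rTensor_tmul]
  generalize ΔL a = X
  induction X using TensorProduct.induction_on with
  | zero => simp
  | add x y hx hy => simp only [add_tmul, map_add, hx, hy]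
  | tmul h a' =>
    simp only [betaRaw, LinearMap.comp_apply, LinearEquiv.coe_coe,
      TensorProduct.tensorTensorTensorComm_tmul, TensorProduct.map_tmul,
      TensorProduct.comm_tmul, LinearMap.rTensor_tmul, TensorProduct.assoc_tmul,
      LinearMap.lTensor_tmul, hAct, TensorProduct.lift.tmul, LinearMap.mk₂_apply]
    generalize ρ (μ (a' ⊗ₜ m)) = W
    induction W using TensorProduct.induction_on with
    | zero => simp
    | add x y hx hy => simp only [add_tmul, tmul_add, map_add, hx, hy]
    | tmul m' c =>
      simp only [TensorProduct.assoc_tmul, LinearMap.lTensor_tmul,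
        TensorProduct.comm_tmul, LinearMap.comp_apply, LinearMap.flip_apply,
        TensorProduct.mk_apply]
      rw [← balQ]

lemma lemB (a : A) (v : V) (m : M) :
    LinearMap.lTensor M ((balancer H C actR V).mkQ ∘ₗ (TensorProduct.mk k C V).flip v)
      (((TensorProduct.map μ actL) ∘ₗ
        (TensorProduct.tensorTensorTensorComm k A K M C).toLinearMap ∘ₗ
        (LinearMap.lTensor (A ⊗[k] K) ρ) ∘ₗ (LinearMap.rTensor M ΔR)) (a ⊗ₜ m))
    = LinearMap.lTensor M (balancer H C actR V).mkQ
        ((TensorProduct.map μ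
          ((LinearMap.rTensor V actL) ∘ₗ (TensorProduct.assoc k K C V).symm.toLinearMap))
          ((TensorProduct.tensorTensorTensorComm k A K M (C ⊗[k] V))
            ((LinearMap.rTensor (M ⊗[k] (C ⊗[k] V)) ΔR) (a ⊗ₜ betaRaw ρ V (v ⊗ₜ m))))) := by
  simp only [LinearMap.comp_apply, LinearEquiv.coe_coe, LinearMap.rTensor_tmul, betaRaw,
    TensorProduct.comm_tmul]
  generalize ΔR a = Y
  induction Y using TensorProduct.induction_on with
  | zero => simp
  | add x y hx hy => simp only [add_tmul, map_add, hx, hy]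
  | tmul a0 k1 =>
    simp only [LinearMap.lTensor_tmul]
    generalize ρ m = W
    induction W using TensorProduct.induction_on with
    | zero => simp
    | add x y hx hy => simp only [add_tmul, tmul_add, map_add, hx, hy]
    | tmul m0 c =>
      simp only [TensorProduct.assoc_tmul, TensorProduct.tensorTensorTensorComm_tmul,
        TensorProduct.map_tmul, LinearMap.lTensor_tmul, LinearMap.comp_apply,
        LinearEquiv.coe_coe, TensorProduct.assoc_symm_tmul, LinearMap.rTensor_tmul,
        LinearMap.flip_apply, TensorProduct.mk_apply]

end Aux

/-- For a generalized Yetter-Drinfeld module `M` over the YD datum `(H,K,A,C)` and a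
left `H`-module `V`, the half-braid `β_{V,M} : V ⊗ M → M ⊗ (C ⊗_H V)`,
`v ⊗ m ↦ m₍₀₎ ⊗ (m₍₁₎ ⊗_H v)`, is left `A`-linear, where `A` acts on `V ⊗ M` by
`a·(v ⊗ m) = a₍₋₁₎·v ⊗ a₍₀₎m` and on `M ⊗ (C ⊗_H V)` by
`a·(m ⊗ c ⊗_H v) = a₍₀₎m ⊗ (a₍₁₎ ▷ c) ⊗_H v`. -/


theorem genYD_halfBraid_A_linear
    {H : Type} [Ring H] [Bialgebra k H]
    {K : Type} [Ring K] [Bialgebra k K]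
    {A : Type} [Ring A] [Algebra k A]
    {C : Type} [AddCommGroup C] [Module k C] [Coalgebra k C]
    {M : Type} [AddCommGroup M] [Module k M]
    (ΔL : A →ₗ[k] H ⊗[k] A) (ΔR : A →ₗ[k] A ⊗[k] K)
    (actL : K ⊗[k] C →ₗ[k] C) (actR : C ⊗[k] H →ₗ[k] C)
    (μ : A ⊗[k] M →ₗ[k] M) (ρ : M →ₗ[k] M ⊗[k] C)
    -- `M` is a right `C`-comodule and a left `A`-module
    (hρcoassoc : (TensorProduct.assoc k M C C).toLinearMap ∘ₗ
        (LinearMap.rTensor C ρ) ∘ₗ ρ = (LinearMap.lTensor M (comul (R := k) (A := C))) ∘ₗ ρ)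
    (hρcounit : (TensorProduct.rid k M).toLinearMap ∘ₗ
        (LinearMap.lTensor M (counit (R := k) (A := C))) ∘ₗ ρ = LinearMap.id)
    (hμone : ∀ m : M, μ (1 ⊗ₜ m) = m)
    (hμmul : ∀ (a b : A) (m : M), μ ((a * b) ⊗ₜ m) = μ (a ⊗ₜ μ (b ⊗ₜ m)))
    -- Yetter-Drinfeld compatibility
    (hYD : (LinearMap.lTensor M actR) ∘ₗ (TensorProduct.assoc k M C H).toLinearMap ∘ₗ
        (TensorProduct.comm k H (M ⊗[k] C)).toLinearMap ∘ₗ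
        (LinearMap.lTensor H (ρ ∘ₗ μ)) ∘ₗ (TensorProduct.assoc k H A M).toLinearMap ∘ₗ
        (LinearMap.rTensor M ΔL)
      = (TensorProduct.map μ actL) ∘ₗ (TensorProduct.tensorTensorTensorComm k A K M C).toLinearMap
          ∘ₗ (LinearMap.lTensor (A ⊗[k] K) ρ) ∘ₗ (LinearMap.rTensor M ΔR))
    (V : Type) [AddCommGroup V] [Module k V] [Module H V] [IsScalarTower k H V]
    [SMulCommClass k H V] :
    (LinearMap.lTensor M (balancer H C actR V).mkQ) ∘ₗ (betaRaw ρ V) ∘ₗ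
      -- the action of `A` on `V ⊗ M`
      ((TensorProduct.map (hAct H V) μ) ∘ₗ
        (TensorProduct.tensorTensorTensorComm k H A V M).toLinearMap ∘ₗ
        (LinearMap.rTensor (V ⊗[k] M) ΔL))
    = (LinearMap.lTensor M (balancer H C actR V).mkQ) ∘ₗ
      -- the action of `A` on `M ⊗ (C ⊗ V)`
      ((TensorProduct.map μ
          ((LinearMap.rTensor V actL) ∘ₗ (TensorProduct.assoc k K C V).symm.toLinearMap)) ∘ₗ
        (TensorProduct.tensorTensorTensorComm k A K M (C ⊗[k] V)).toLinearMap ∘ₗ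
        (LinearMap.rTensor (M ⊗[k] (C ⊗[k] V)) ΔR)) ∘ₗ
      (LinearMap.lTensor A (betaRaw ρ V)) := by
  apply TensorProduct.ext'
  intro a z
  induction z using TensorProduct.induction_on with
  | zero => simp
  | add x y hx hy => simp only [tmul_add, map_add, hx, hy]
  | tmul v m =>
    simp only [LinearMap.comp_apply, LinearEquiv.coe_coe, LinearMap.lTensor_tmul]
    rw [lemA ΔL actR μ ρ V a v m, hYD, lemB ΔR actL actR μ ρ V a v m]
end

section
/- Let (H,K,A,C) be a Yetter-Drinfeld datum, M ∈ _A YD^C(H,K), and U, V left H-modules. Then (id_M ⊗ ψ_{U,V}) ∘ β_{U⊗V, M} = (β_{U,M} ⊗ id_{C⊗_H V}) ∘ (id_U ⊗ β_{V,M}), where β_{V,M}(v ⊗ m) = m_{[0]} ⊗ m_{[1]} ⊗_H v and ψ_{U,V}(c ⊗_H (u ⊗ v)) = (c_{(1)} ⊗_H u) ⊗ (c_{(2)} ⊗_H v). -/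
open TensorProduct Coalgebra

variable {k : Type} [CommRing k]

/-- Heptagon condition for the half-braid of a generalized Yetter-Drinfeld module:
`(id_M ⊗ ψ_{U,V}) ∘ β_{U⊗V,M} = (β_{U,M} ⊗ id_{C⊗_H V}) ∘ (id_U ⊗ β_{V,M})`,
as maps `(U ⊗ V) ⊗ M → M ⊗ ((C ⊗_H U) ⊗ (C ⊗_H V))`, where `C ⊗_H W` is realized as
the quotient of `C ⊗ₖ W` by the `H`-balancing submodule and
`ψ_{U,V}(c ⊗_H (u ⊗ v)) = (c₍₁₎ ⊗_H u) ⊗ (c₍₂₎ ⊗_H v)`. -/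
theorem genYD_heptagon
    {H : Type} [Ring H] [Bialgebra k H]
    {K : Type} [Ring K] [Bialgebra k K]
    {A : Type} [Ring A] [Algebra k A]
    {C : Type} [AddCommGroup C] [Module k C] [Coalgebra k C]
    {M : Type} [AddCommGroup M] [Module k M]
    (ΔL : A →ₗ[k] H ⊗[k] A) (ΔR : A →ₗ[k] A ⊗[k] K)
    (actL : K ⊗[k] C →ₗ[k] C) (actR : C ⊗[k] H →ₗ[k] C)
    (μ : A ⊗[k] M →ₗ[k] M) (ρ : M →ₗ[k] M ⊗[k] C)
    -- `M` is a right `C`-comodule (coassociative and counital coaction)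
    (hρcoassoc : (TensorProduct.assoc k M C C).toLinearMap ∘ₗ
        (LinearMap.rTensor C ρ) ∘ₗ ρ = (LinearMap.lTensor M (comul (R := k) (A := C))) ∘ₗ ρ)
    (hρcounit : (TensorProduct.rid k M).toLinearMap ∘ₗ
        (LinearMap.lTensor M (counit (R := k) (A := C))) ∘ₗ ρ = LinearMap.id)
    -- `M` is a left `A`-module
    (hμone : ∀ m : M, μ (1 ⊗ₜ m) = m)
    (hμmul : ∀ (a b : A) (m : M), μ ((a * b) ⊗ₜ m) = μ (a ⊗ₜ μ (b ⊗ₜ m)))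
    -- Yetter-Drinfeld compatibility
    (hYD : (LinearMap.lTensor M actR) ∘ₗ (TensorProduct.assoc k M C H).toLinearMap ∘ₗ
        (TensorProduct.comm k H (M ⊗[k] C)).toLinearMap ∘ₗ
        (LinearMap.lTensor H (ρ ∘ₗ μ)) ∘ₗ (TensorProduct.assoc k H A M).toLinearMap ∘ₗ
        (LinearMap.rTensor M ΔL)
      = (TensorProduct.map μ actL) ∘ₗ (TensorProduct.tensorTensorTensorComm k A K M C).toLinearMap
          ∘ₗ (LinearMap.lTensor (A ⊗[k] K) ρ) ∘ₗ (LinearMap.rTensor M ΔR))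
    -- two left `H`-modules
    (U : Type) [AddCommGroup U] [Module k U] [Module H U] [IsScalarTower k H U]
    (V : Type) [AddCommGroup V] [Module k V] [Module H V] [IsScalarTower k H V] :
    (LinearMap.lTensor M
        ((TensorProduct.map (balancer H C actR U).mkQ (balancer H C actR V).mkQ) ∘ₗ
          (TensorProduct.tensorTensorTensorComm k C C U V).toLinearMap ∘ₗ
          (LinearMap.rTensor (U ⊗[k] V) (comul (R := k) (A := C))))) ∘ₗ
      betaRaw ρ (U ⊗[k] V)
    = (LinearMap.lTensor M
          (TensorProduct.map (balancer H C actR U).mkQ (balancer H C actR V).mkQ)) ∘ₗ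
      (TensorProduct.assoc k M (C ⊗[k] U) (C ⊗[k] V)).toLinearMap ∘ₗ
      (LinearMap.rTensor (C ⊗[k] V) (betaRaw ρ U)) ∘ₗ
      (TensorProduct.assoc k U M (C ⊗[k] V)).symm.toLinearMap ∘ₗ
      (LinearMap.lTensor U (betaRaw ρ V)) ∘ₗ
      (TensorProduct.assoc k U V M).toLinearMap := by
  ext u v m
  simp only [betaRaw, LinearMap.coe_comp, Function.comp_apply, AlgebraTensorModule.curry_apply,
    curry_apply, LinearMap.coe_restrictScalars, LinearEquiv.coe_coe, TensorProduct.assoc_tmul,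
    TensorProduct.comm_tmul, LinearMap.rTensor_tmul, LinearMap.lTensor_tmul, LinearMap.id_coe,
    id_eq]
  set q1 := (balancer H C actR U).mkQ with hq1
  set q2 := (balancer H C actR V).mkQ with hq2
  set G := LinearMap.lTensor M (TensorProduct.map (q1 ∘ₗ (TensorProduct.mk k C U).flip u)
    (q2 ∘ₗ (TensorProduct.mk k C V).flip v)) with hG
  have key := LinearMap.congr_fun hρcoassoc m
  simp only [LinearMap.coe_comp, Function.comp_apply, LinearEquiv.coe_coe] at key
  have hA' : ∀ s : C ⊗[k] C,
      TensorProduct.map q1 q2 ((TensorProduct.tensorTensorTensorComm k C C U V)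
        (s ⊗ₜ[k] (u ⊗ₜ[k] v)))
      = TensorProduct.map (q1 ∘ₗ (TensorProduct.mk k C U).flip u)
          (q2 ∘ₗ (TensorProduct.mk k C V).flip v) s := by
    intro s
    induction s using TensorProduct.induction_on with
    | zero => simp
    | tmul c d => simp [TensorProduct.tensorTensorTensorComm_tmul]
    | add x y hx hy => simp [add_tmul, hx, hy]
  have hA : ∀ t : M ⊗[k] C,
      (LinearMap.lTensor M
          (TensorProduct.map q1 q2 ∘ₗ
            (TensorProduct.tensorTensorTensorComm k C C U V).toLinearMap ∘ₗ
            LinearMap.rTensor (U ⊗[k] V) (comul (R := k) (A := C))))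
        ((TensorProduct.assoc k M C (U ⊗[k] V)) (t ⊗ₜ[k] (u ⊗ₜ[k] v)))
      = G (LinearMap.lTensor M (comul (R := k) (A := C)) t) := by
    intro t
    induction t using TensorProduct.induction_on with
    | zero => simp
    | tmul m' c =>
        simp only [TensorProduct.assoc_tmul, LinearMap.lTensor_tmul, LinearMap.coe_comp,
          Function.comp_apply, LinearEquiv.coe_coe, LinearMap.rTensor_tmul, hG]
        rw [hA']
    | add x y hx hy => simp only [add_tmul, map_add, hx, hy]
  have hB' : ∀ (s : M ⊗[k] C) (c : C),
      (LinearMap.lTensor M (TensorProduct.map q1 q2))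
        ((TensorProduct.assoc k M (C ⊗[k] U) (C ⊗[k] V))
          (((TensorProduct.assoc k M C U) (s ⊗ₜ[k] u)) ⊗ₜ[k] (c ⊗ₜ[k] v)))
      = G ((TensorProduct.assoc k M C C) (s ⊗ₜ[k] c)) := by
    intro s c
    induction s using TensorProduct.induction_on with
    | zero => simp
    | tmul m'' c' => simp [hG]
    | add x y hx hy => simp only [add_tmul, map_add, hx, hy]
  have hB : ∀ t : M ⊗[k] C,
      (LinearMap.lTensor M (TensorProduct.map q1 q2))
        ((TensorProduct.assoc k M (C ⊗[k] U) (C ⊗[k] V))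
          ((LinearMap.rTensor (C ⊗[k] V)
              ((TensorProduct.assoc k M C U).toLinearMap ∘ₗ LinearMap.rTensor U ρ ∘ₗ
                (TensorProduct.comm k U M).toLinearMap))
            ((TensorProduct.assoc k U M (C ⊗[k] V)).symm
              (u ⊗ₜ[k] (TensorProduct.assoc k M C V) (t ⊗ₜ[k] v)))))
      = G ((TensorProduct.assoc k M C C) ((LinearMap.rTensor C ρ) t)) := by
    intro t
    induction t using TensorProduct.induction_on with
    | zero => simp
    | tmul m' c =>
        simp only [TensorProduct.assoc_tmul, TensorProduct.assoc_symm_tmul,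
          LinearMap.rTensor_tmul, LinearMap.coe_comp, Function.comp_apply, LinearEquiv.coe_coe,
          TensorProduct.comm_tmul]
        exact hB' (ρ m') c
    | add x y hx hy => simp only [add_tmul, tmul_add, map_add, hx, hy]
  rw [hA (ρ m), hB (ρ m), key]
end
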